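/- Let $\mathcal{F}$ be a family of compact convex sets in $\mathbb{R}^d$, $0 \leq k \leq d-1$, and $m \in \mathbb{N}$. If every finite subfamily of $\mathcal{F}$ can be pierced by $m$ $k$-flats, then $\mathcal{F}$ can be pierced by $m$ $k$-flats. -/

import Mathlib

/-- A `k`-flat in `ℝ^d`: a (nonempty) affine subspace of dimension `k`. -/
def IsKFlat {d : ℕ} (k : ℕ) (F : Set (EuclideanSpace ℝ (Fin d))) : Prop :=
  ∃ A : AffineSubspace ℝ (EuclideanSpace ℝ (Fin d)),
    (A : Set (EuclideanSpace ℝ (Fin d))).Nonempty ∧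
    Module.finrank ℝ A.direction = k ∧ F = ↑A

/-- A collection `T` of `k`-flats pierces the family `𝓕`. -/
def PiercedByFlats {d : ℕ} (k : ℕ) (T 𝓕 : Set (Set (EuclideanSpace ℝ (Fin d)))) : Prop :=
  (∀ f ∈ T, IsKFlat k f) ∧ ∀ B ∈ 𝓕, ∃ f ∈ T, (B ∩ f).Nonempty

/-- The family `𝓕` is pierceable by finitely many `k`-flats. -/
def FinFlatPierceable {d : ℕ} (k : ℕ) (𝓕 : Set (Set (EuclideanSpace ℝ (Fin d)))) : Prop :=
  ∃ T : Set (Set (EuclideanSpace ℝ (Fin d))), T.Finite ∧ PiercedByFlats k T 𝓕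

/-- The family `𝓕` is pierceable by finitely many points. -/
def FinPointPierceable {d : ℕ} (𝓕 : Set (Set (EuclideanSpace ℝ (Fin d)))) : Prop :=
  ∃ P : Set (EuclideanSpace ℝ (Fin d)), P.Finite ∧ ∀ B ∈ 𝓕, ∃ p ∈ P, p ∈ B

/-- In-radius: the radius of a largest closed ball contained in `S`. -/
noncomputable def inradius {d : ℕ} (S : Set (EuclideanSpace ℝ (Fin d))) : ℝ :=
  sSup {r : ℝ | ∃ c, Metric.closedBall c r ⊆ S}

/-- Out-radius: the radius of the smallest closed ball containing `S`. -/
noncomputable def circumradius {d : ℕ} (S : Set (EuclideanSpace ℝ (Fin d))) : ℝ :=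
  sInf {R : ℝ | 0 ≤ R ∧ ∃ c, S ⊆ Metric.closedBall c R}

/-- Condition number of a set: in-radius over out-radius. -/
noncomputable def condNumber {d : ℕ} (S : Set (EuclideanSpace ℝ (Fin d))) : ℝ :=
  inradius S / circumradius S

private lemma flat_of_frame {d k : ℕ} (p : EuclideanSpace ℝ (Fin d))
    (v : Fin k → EuclideanSpace ℝ (Fin d)) (hv : Orthonormal ℝ v) :
    IsKFlat k ((AffineSubspace.mk' p (Submodule.span ℝ (Set.range v)) : AffineSubspace ℝ (EuclideanSpace ℝ (Fin d))) : Set (EuclideanSpace ℝ (Fin d))) := by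
  refine ⟨_, ⟨p, AffineSubspace.self_mem_mk' _ _⟩, ?_, rfl⟩
  rw [AffineSubspace.direction_mk']
  rw [finrank_span_eq_card hv.linearIndependent, Fintype.card_fin]

private lemma exists_anchor_frame {d k : ℕ} {F : Set (EuclideanSpace ℝ (Fin d))}
    (hF : IsKFlat k F) {x : EuclideanSpace ℝ (Fin d)} (hx : x ∈ F) :
    ∃ v : Fin k → EuclideanSpace ℝ (Fin d), Orthonormal ℝ v ∧
      ∀ y ∈ F, y - x ∈ Submodule.span ℝ (Set.range v) := by
  obtain ⟨A, -, hdim, rfl⟩ := hF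
  set W := A.direction with hW
  haveI : FiniteDimensional ℝ W := FiniteDimensional.finiteDimensional_submodule W
  let b := stdOrthonormalBasis ℝ W
  let v : Fin k → EuclideanSpace ℝ (Fin d) := fun i => (b (finCongr hdim.symm i) : _)
  have hvo : Orthonormal ℝ v := by
    have h1 : Orthonormal ℝ (fun i : Fin k => b (finCongr hdim.symm i)) :=
      b.orthonormal.comp _ ((finCongr hdim.symm).injective)
    exact h1.comp_linearIsometry W.subtypeₗᵢ
  have hspan : Submodule.span ℝ (Set.range v) = W := by
    have hr : Set.range v = W.subtype '' Set.range b := by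
      have : Set.range (fun i : Fin k => b (finCongr hdim.symm i)) = Set.range b :=
        Function.Surjective.range_comp (finCongr hdim.symm).surjective b
      rw [show v = W.subtype ∘ (fun i : Fin k => b (finCongr hdim.symm i)) from rfl,
        Set.range_comp, this]
    rw [hr, Submodule.span_image, ← OrthonormalBasis.coe_toBasis b, b.toBasis.span_eq,
      Submodule.map_subtype_top]
  refine ⟨v, hvo, fun y hy => ?_⟩
  rw [hspan]
  have := AffineSubspace.vsub_mem_direction hy hx
  rwa [vsub_eq_sub] at this

private lemma one_flat {d k : ℕ} (𝓖 : Set (Set (EuclideanSpace ℝ (Fin d))))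
    (hcomp : ∀ S ∈ 𝓖, IsCompact S) (hne : 𝓖.Nonempty)
    (h : ∀ G ⊆ 𝓖, G.Finite → G.Nonempty →
      ∃ F, IsKFlat k F ∧ ∀ B ∈ G, (B ∩ F).Nonempty) :
    ∃ F, IsKFlat k F ∧ ∀ B ∈ 𝓖, (B ∩ F).Nonempty := by
  classical
  obtain ⟨B₀, hB₀⟩ := hne
  set Orth : Set (Fin k → EuclideanSpace ℝ (Fin d)) := {v | Orthonormal ℝ v} with hOrth
  have hOrthClosed : IsClosed Orth := by
    have : Orth = ⋂ (i : Fin k) (j : Fin k),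
        {v : Fin k → EuclideanSpace ℝ (Fin d) | (inner ℝ (v i) (v j) : ℝ) = if i = j then 1 else 0} := by
      ext v
      simp only [hOrth, Set.mem_setOf_eq, Set.mem_iInter, orthonormal_iff_ite]
    rw [this]
    exact isClosed_iInter fun i => isClosed_iInter fun j =>
      isClosed_eq (Continuous.inner (continuous_apply i) (continuous_apply j)) continuous_const
  have hOrthCompact : IsCompact Orth := by
    refine (isCompact_closedBall (0 : Fin k → EuclideanSpace ℝ (Fin d)) 1).of_isClosed_subset hOrthClosed ?_
    intro v hv
    rw [Metric.mem_closedBall, dist_zero_right]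
    refine (pi_norm_le_iff_of_nonneg zero_le_one).mpr fun i => le_of_eq (hv.1 i)
  obtain ⟨R₀, hR₀⟩ := Bornology.IsBounded.exists_norm_le (hcomp B₀ hB₀).isBounded
  -- the constraint sets
  set cl : Set (EuclideanSpace ℝ (Fin d)) → Set (EuclideanSpace ℝ (Fin d) × (Fin k → EuclideanSpace ℝ (Fin d))) := fun B =>
    {pv | pv.1 ∈ B₀ ∧ pv.2 ∈ Orth ∧ ∃ x ∈ B, x - pv.1 ∈ Submodule.span ℝ (Set.range pv.2)}
    with hcl
  have hclCompact : ∀ B ∈ 𝓖, IsCompact (cl B) := by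
    intro B hB
    obtain ⟨R, hR⟩ := Bornology.IsBounded.exists_norm_le (hcomp B hB).isBounded
    set K : Set ((EuclideanSpace ℝ (Fin d) × (Fin k → EuclideanSpace ℝ (Fin d))) × EuclideanSpace ℝ (Fin d) × (Fin k → ℝ)) :=
      {q | q.1.1 ∈ B₀ ∧ q.1.2 ∈ Orth ∧ q.2.1 ∈ B ∧
        q.2.2 ∈ Metric.closedBall (0 : Fin k → ℝ) (R₀ + R) ∧
        q.2.1 = q.1.1 + ∑ i, q.2.2 i • q.1.2 i} with hK
    have hKeq : K = ((fun q : (EuclideanSpace ℝ (Fin d) × (Fin k → EuclideanSpace ℝ (Fin d))) ×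
          EuclideanSpace ℝ (Fin d) × (Fin k → ℝ) => q.1.1) ⁻¹' B₀) ∩
        ((fun q => q.1.2) ⁻¹' Orth) ∩ ((fun q => q.2.1) ⁻¹' B) ∩
        ((fun q => q.2.2) ⁻¹' Metric.closedBall (0 : Fin k → ℝ) (R₀ + R)) ∩
        {q | q.2.1 = q.1.1 + ∑ i, q.2.2 i • q.1.2 i} := by
      ext q
      simp only [hK, Set.mem_setOf_eq, Set.mem_inter_iff, Set.mem_preimage]
      tauto
    have hKc : IsCompact K := by
      refine IsCompact.of_isClosed_subset
        (((hcomp B₀ hB₀).prod hOrthCompact).prod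
          ((hcomp B hB).prod (isCompact_closedBall (0 : Fin k → ℝ) (R₀ + R)))) ?_ ?_
      · rw [hKeq]
        refine (((((hcomp B₀ hB₀).isClosed.preimage
            (continuous_fst.comp continuous_fst)).inter
          (hOrthClosed.preimage (continuous_snd.comp continuous_fst))).inter
          ((hcomp B hB).isClosed.preimage (continuous_fst.comp continuous_snd))).inter
          (Metric.isClosed_closedBall.preimage (continuous_snd.comp continuous_snd))).inter ?_
        · exact isClosed_eq (continuous_fst.comp continuous_snd)
            ((continuous_fst.comp continuous_fst).add (continuous_finset_sum _ fun i _ =>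
              Continuous.smul ((continuous_apply i).comp (continuous_snd.comp continuous_snd))
                ((continuous_apply i).comp (continuous_snd.comp continuous_fst))))
      · rintro q ⟨h1, h2, h3, h4, -⟩
        exact ⟨⟨h1, h2⟩, h3, h4⟩
    have himg : cl B = Prod.fst '' K := by
      ext pv
      constructor
      · rintro ⟨hp, hv, x, hx, hsp⟩
        rw [Submodule.mem_span_range_iff_exists_fun] at hsp
        obtain ⟨t, ht⟩ := hsp
        refine ⟨(pv, x, t), ⟨hp, hv, hx, ?_, by rw [ht]; abel⟩, rfl⟩
        rw [Metric.mem_closedBall, dist_zero_right]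
        have hnn : (0:ℝ) ≤ R₀ + R := add_nonneg ((norm_nonneg _).trans (hR₀ _ hp))
          ((norm_nonneg _).trans (hR x hx))
        refine (pi_norm_le_iff_of_nonneg hnn).mpr fun i => ?_
        have hti : t i = (inner ℝ (pv.2 i) (x - pv.1) : ℝ) := by
          rw [← ht]
          exact (hv.inner_right_fintype t i).symm
        show |t i| ≤ R₀ + R
        rw [hti]
        calc |(inner ℝ (pv.2 i) (x - pv.1) : ℝ)| ≤ ‖pv.2 i‖ * ‖x - pv.1‖ := abs_real_inner_le_norm _ _
          _ = ‖x - pv.1‖ := by rw [hv.1 i, one_mul]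
          _ ≤ ‖x‖ + ‖pv.1‖ := norm_sub_le _ _
          _ ≤ R + R₀ := add_le_add (hR x hx) (hR₀ _ hp)
          _ = R₀ + R := add_comm _ _
      · rintro ⟨q, ⟨h1, h2, h3, -, h5⟩, rfl⟩
        refine ⟨h1, h2, q.2.1, h3, ?_⟩
        rw [h5, add_sub_cancel_left]
        exact Submodule.sum_mem _ fun i _ =>
          Submodule.smul_mem _ _ (Submodule.subset_span (Set.mem_range_self i))
    rw [himg]
    exact hKc.image continuous_fst
  -- finite intersections are nonempty
  have hfip : ∀ t : Finset (Set (EuclideanSpace ℝ (Fin d))), ↑t ⊆ 𝓖 → (cl B₀ ∩ ⋂ B ∈ t, cl B).Nonempty := by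
    intro t ht
    set G : Set (Set (EuclideanSpace ℝ (Fin d))) := insert B₀ ↑t with hG
    obtain ⟨F, hFflat, hFp⟩ := h G (Set.insert_subset hB₀ ht)
      ((t.finite_toSet).insert B₀) ⟨B₀, Set.mem_insert _ _⟩
    obtain ⟨p, hpB₀, hpF⟩ := hFp B₀ (Set.mem_insert _ _)
    obtain ⟨v, hvo, hvs⟩ := exists_anchor_frame hFflat hpF
    have hmem : ∀ B ∈ G, (p, v) ∈ cl B := by
      intro B hB
      obtain ⟨x, hxB, hxF⟩ := hFp B hB
      exact ⟨hpB₀, hvo, x, hxB, hvs x hxF⟩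
    exact ⟨(p, v), hmem B₀ (Set.mem_insert _ _), Set.mem_iInter₂.mpr fun B hBt =>
      hmem B (Set.mem_insert_of_mem _ hBt)⟩
  -- compactness
  have hmain : (cl B₀ ∩ ⋂ B : 𝓖, cl B).Nonempty := by
    by_contra hcon
    rw [Set.not_nonempty_iff_eq_empty] at hcon
    obtain ⟨u, hu⟩ := (hclCompact B₀ hB₀).elim_finite_subfamily_closed (fun B : 𝓖 => cl B)
      (fun B => (hclCompact B B.2).isClosed) hcon
    obtain ⟨pv, hpv1, hpv2⟩ := hfip (u.image Subtype.val)
      (by intro B hB; simp only [Finset.coe_image, Set.mem_image, Finset.mem_coe] at hB;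
          obtain ⟨b, -, rfl⟩ := hB; exact b.2)
    rw [Set.eq_empty_iff_forall_notMem] at hu
    refine hu pv ⟨hpv1, Set.mem_iInter₂.mpr fun B hBu => ?_⟩
    exact Set.mem_iInter₂.mp hpv2 B.1
      (Finset.mem_image.mpr ⟨B, hBu, rfl⟩)
  obtain ⟨⟨p, v⟩, hpv0, hpvAll⟩ := hmain
  obtain ⟨-, hvo, -⟩ := hpv0
  refine ⟨((AffineSubspace.mk' p (Submodule.span ℝ (Set.range v)) : AffineSubspace ℝ (EuclideanSpace ℝ (Fin d))) :
    Set (EuclideanSpace ℝ (Fin d))), flat_of_frame p v hvo, ?_⟩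
  intro B hB
  have hm : (p, v) ∈ cl B := Set.mem_iInter.mp hpvAll ⟨B, hB⟩
  obtain ⟨-, -, x, hxB, hxsp⟩ := hm
  refine ⟨x, hxB, ?_⟩
  rw [SetLike.mem_coe, AffineSubspace.mem_mk']
  rwa [vsub_eq_sub]

theorem stmt3 (d k m : ℕ) (hk : k ≤ d - 1)
    (𝓕 : Set (Set (EuclideanSpace ℝ (Fin d))))
    (hcomp : ∀ S ∈ 𝓕, IsCompact S) (hconv : ∀ S ∈ 𝓕, Convex ℝ S)
    (h : ∀ 𝒢 ⊆ 𝓕, 𝒢.Finite → ∃ T : Set (Set (EuclideanSpace ℝ (Fin d))),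
      T.Finite ∧ T.ncard ≤ m ∧ PiercedByFlats k T 𝒢) :
    ∃ T : Set (Set (EuclideanSpace ℝ (Fin d))),
      T.Finite ∧ T.ncard ≤ m ∧ PiercedByFlats k T 𝓕 := by
  classical
  rcases Set.eq_empty_or_nonempty 𝓕 with hemp | ⟨B₀, hB₀⟩
  · refine ⟨∅, Set.finite_empty, by simp, fun f hf => absurd hf (Set.notMem_empty f), ?_⟩
    intro B hB
    rw [hemp] at hB
    exact absurd hB (Set.notMem_empty B)
  have hm : 0 < m := by
    obtain ⟨T, hTfin, hTcard, hTflat, hTp⟩ :=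
      h {B₀} (Set.singleton_subset_iff.mpr hB₀) (Set.finite_singleton _)
    obtain ⟨f, hf, -⟩ := hTp B₀ rfl
    exact lt_of_lt_of_le ((Set.ncard_pos hTfin).mpr ⟨f, hf⟩) hTcard
  -- directed set of finite subfamilies
  set D := {G : Set (Set (EuclideanSpace ℝ (Fin d))) // G ⊆ 𝓕 ∧ G.Finite} with hD
  have key : ∀ 𝒢 : D, ∃ (A : Fin m → Set (EuclideanSpace ℝ (Fin d)))
      (c : Set (EuclideanSpace ℝ (Fin d)) → Fin m),
      ∀ B ∈ 𝒢.1, IsKFlat k (A (c B)) ∧ (B ∩ A (c B)).Nonempty := by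
    rintro ⟨G, hG1, hG2⟩
    obtain ⟨T, hTfin, hTcard, hTflat, hTp⟩ := h G hG1 hG2
    haveI := hTfin.fintype
    have hcard : Fintype.card T ≤ Fintype.card (Fin m) := by
      rw [Fintype.card_fin, ← Nat.card_eq_fintype_card, Nat.card_coe_set_eq]
      exact hTcard
    obtain ⟨e⟩ := Function.Embedding.nonempty_of_card_le hcard
    refine ⟨fun i => if hi : ∃ t : T, e t = i then ↑hi.choose else ∅,
      fun B => if hB : ∃ f ∈ T, (B ∩ f).Nonempty then e ⟨hB.choose, hB.choose_spec.1⟩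
        else ⟨0, hm⟩, ?_⟩
    intro B hBG
    have hB : ∃ f ∈ T, (B ∩ f).Nonempty := hTp B hBG
    simp only [dif_pos hB]
    have hi : ∃ t : T, e t = e ⟨hB.choose, hB.choose_spec.1⟩ := ⟨_, rfl⟩
    simp only [dif_pos hi]
    have : hi.choose = ⟨hB.choose, hB.choose_spec.1⟩ := e.injective hi.choose_spec
    rw [this]
    exact ⟨hTflat _ hB.choose_spec.1, hB.choose_spec.2⟩
  choose A c hAc using key
  -- ultrafilter on D
  haveI : Nonempty D := ⟨⟨∅, Set.empty_subset _, Set.finite_empty⟩⟩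
  set S : D → Set D := fun G₀ => {G : D | G₀.1 ⊆ G.1} with hS
  have hdir : Directed (· ≥ ·) (fun G₀ : D => Filter.principal (S G₀)) := by
    intro G₁ G₂
    refine ⟨⟨G₁.1 ∪ G₂.1, Set.union_subset G₁.2.1 G₂.2.1, G₁.2.2.union G₂.2.2⟩, ?_, ?_⟩
    · exact Filter.principal_mono.mpr fun G hG => Set.Subset.trans Set.subset_union_left hG
    · exact Filter.principal_mono.mpr fun G hG => Set.Subset.trans Set.subset_union_right hG
  haveI hFne : (⨅ G₀ : D, Filter.principal (S G₀)).NeBot :=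
    Filter.iInf_neBot_of_directed' hdir fun G₀ =>
      Filter.principal_neBot_iff.mpr ⟨G₀, Set.Subset.rfl⟩
  set U : Ultrafilter D := Ultrafilter.of (⨅ G₀ : D, Filter.principal (S G₀)) with hU
  have hUmem : ∀ G₀ : D, S G₀ ∈ U := fun G₀ =>
    Ultrafilter.of_le _ (Filter.mem_iInf_of_mem G₀ (Filter.mem_principal_self _))
  -- limiting color
  have hcol : ∀ B, ∃ i : Fin m, {G : D | c G B = i} ∈ U := by
    intro B
    by_contra hno
    push_neg at hno
    have h2 : (⋂ i, {G : D | c G B = i}ᶜ) ∈ U :=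
      Filter.iInter_mem.mpr fun i => Ultrafilter.compl_mem_iff_notMem.mpr (hno i)
    obtain ⟨G, hG⟩ := Filter.nonempty_of_mem h2
    exact (Set.mem_iInter.mp hG (c G B)) rfl
  choose cInf hcInf using hcol
  -- one flat per color class
  have classflat : ∀ i : Fin m, ∃ F, ({B ∈ 𝓕 | cInf B = i}.Nonempty →
      IsKFlat k F ∧ ∀ B ∈ {B ∈ 𝓕 | cInf B = i}, (B ∩ F).Nonempty) := by
    intro i
    by_cases hne : ({B ∈ 𝓕 | cInf B = i}).Nonempty
    · have hof := one_flat (k := k) {B ∈ 𝓕 | cInf B = i} (fun Q hQ => hcomp Q hQ.1) hne ?_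
      · obtain ⟨F, hF⟩ := hof
        exact ⟨F, fun _ => hF⟩
      · intro G hG hGfin hGne
        have hGsub : G ⊆ 𝓕 := fun B hB => (hG hB).1
        have hmemU : (S ⟨G, hGsub, hGfin⟩ ∩ ⋂ B ∈ G, {G' : D | c G' B = i}) ∈ U := by
          refine Filter.inter_mem (hUmem _) ((Filter.biInter_mem hGfin).mpr ?_)
          intro B hB
          have hci : cInf B = i := (hG hB).2
          rw [← hci]
          exact hcInf B
        obtain ⟨G', hG'1, hG'2⟩ := Filter.nonempty_of_mem hmemU
        obtain ⟨B₁, hB₁⟩ := hGne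
        have hc : ∀ B ∈ G, c G' B = i := fun B hB => Set.mem_iInter₂.mp hG'2 B hB
        refine ⟨A G' i, ?_, ?_⟩
        · have := (hAc G' B₁ (hG'1 hB₁)).1
          rwa [hc B₁ hB₁] at this
        · intro B hB
          have := (hAc G' B (hG'1 hB)).2
          rwa [hc B hB] at this
    · exact ⟨∅, fun hn => absurd hn hne⟩
  choose Fl hFl using classflat
  refine ⟨Fl '' {i | ({B ∈ 𝓕 | cInf B = i}).Nonempty}, (Set.toFinite _).image _, ?_, ?_, ?_⟩
  · calc (Fl '' {i | ({B ∈ 𝓕 | cInf B = i}).Nonempty}).ncard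
        ≤ ({i : Fin m | ({B ∈ 𝓕 | cInf B = i}).Nonempty}).ncard :=
          Set.ncard_image_le (Set.toFinite _)
      _ ≤ (Set.univ : Set (Fin m)).ncard :=
          Set.ncard_le_ncard (Set.subset_univ _) Set.finite_univ
      _ = m := by rw [Set.ncard_univ, Nat.card_eq_fintype_card, Fintype.card_fin]
  · rintro f ⟨i, hi, rfl⟩
    exact (hFl i hi).1
  · intro B hB
    have hBi : B ∈ {B' ∈ 𝓕 | cInf B' = cInf B} := ⟨hB, rfl⟩
    exact ⟨Fl (cInf B), ⟨cInf B, ⟨B, hBi⟩, rfl⟩, (hFl _ ⟨B, hBi⟩).2 B hBi⟩
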